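/- Let G be a group of order p^k for a prime p, and suppose H₁ and H₂ are distinct abelian subgroups of G each of index p. If p ≠ 2, then the map x ↦ x^p is a group homomorphism from G to H₁ ∩ H₂; if p = 2, then the map x ↦ x^4 is a group homomorphism from G to H₁ ∩ H₂. -/

import Mathlib

/-- In a finite group, a proper overgroup of a subgroup of prime index is everything. -/
private lemma eq_top_of_lt_of_index_p {G : Type*} [Group G] {p : ℕ} (hp : p.Prime)
    {H K : Subgroup G} (hi : H.index = p) (hlt : H < K) : K = ⊤ := by
  have hd : K.index ∣ p := hi ▸ Subgroup.index_dvd_of_le hlt.le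
  rcases (Nat.Prime.eq_one_or_self_of_dvd hp _ hd) with h1 | hpK
  · exact Subgroup.index_eq_one.mp h1
  · exfalso
    have hmul := Subgroup.relIndex_mul_index hlt.le
    rw [hi, hpK] at hmul
    have h1 : H.relIndex K = 1 :=
      Nat.eq_of_mul_eq_mul_right hp.pos (by rw [hmul, one_mul])
    exact hlt.not_ge (Subgroup.relIndex_eq_one.mp h1)

private lemma normal_of_index_p {G : Type*} [Group G] [Finite G] {p : ℕ} (hp : p.Prime)
    (hG : IsPGroup p G) {H : Subgroup G} (hi : H.index = p) : H.Normal := by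
  haveI : Fact p.Prime := ⟨hp⟩
  haveI : Group.IsNilpotent G := hG.isNilpotent
  have hnc : NormalizerCondition G := normalizerCondition_of_isNilpotent
  refine Subgroup.NormalizerCondition.normal_of_coatom H hnc
    ⟨?_, fun K hK => eq_top_of_lt_of_index_p hp hi hK⟩
  intro htop
  rw [htop, Subgroup.index_top] at hi
  exact hp.one_lt.ne hi

private lemma pow_shift {G : Type*} [Group G] {x y c : G}
    (hc : ∀ g : G, Commute c g) (hyx : y * x = x * y * c) :
    ∀ n : ℕ, y ^ n * x = x * y ^ n * c ^ n := by
  have hm1 : ∀ (m : ℕ) (g h : G), c ^ m * (g * h) = g * (c ^ m * h) := fun m g h => by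
    rw [← mul_assoc, ((hc g).pow_left m).eq, mul_assoc]
  intro n
  induction n with
  | zero => simp
  | succ n ih =>
    have key : (x * y ^ n * c ^ n) * (y * c) = x * (y ^ n * y) * (c ^ n * c) := by
      simp only [mul_assoc]
      rw [hm1]
    calc y ^ (n+1) * x = y ^ n * (y * x) := by rw [pow_succ, mul_assoc]
      _ = (y ^ n * x) * (y * c) := by rw [hyx]; simp only [mul_assoc]
      _ = (x * y ^ n * c ^ n) * (y * c) := by rw [ih]
      _ = x * (y ^ n * y) * (c ^ n * c) := key
      _ = x * y ^ (n+1) * c ^ (n+1) := by rw [pow_succ, pow_succ]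

private lemma mul_pow_eq {G : Type*} [Group G] {x y c : G}
    (hc : ∀ g : G, Commute c g) (hyx : y * x = x * y * c) :
    ∀ n : ℕ, (x * y) ^ n = x ^ n * y ^ n * c ^ (n.choose 2) := by
  have hm1 : ∀ (m : ℕ) (g h : G), c ^ m * (g * h) = g * (c ^ m * h) := fun m g h => by
    rw [← mul_assoc, ((hc g).pow_left m).eq, mul_assoc]
  have hm2 : ∀ (m : ℕ) (g : G), c ^ m * g = g * c ^ m := fun m g => ((hc g).pow_left m).eq
  intro n
  induction n with
  | zero => simp
  | succ n ih =>
    have hchoose : (n+1).choose 2 = n.choose 2 + n := by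
      rw [Nat.choose_succ_succ, Nat.choose_one_right, Nat.add_comm]
    calc (x * y) ^ (n+1) = (x * y) ^ n * (x * y) := by rw [pow_succ]
      _ = x ^ n * y ^ n * c ^ (n.choose 2) * (x * y) := by rw [ih]
      _ = x ^ n * ((y ^ n * x) * (c ^ (n.choose 2) * y)) := by
          simp only [mul_assoc]; rw [hm1]
      _ = x ^ n * ((y ^ n * x) * (y * c ^ (n.choose 2))) := by rw [hm2]
      _ = x ^ n * ((x * y ^ n * c ^ n) * (y * c ^ (n.choose 2))) := by
          rw [pow_shift hc hyx]
      _ = x ^ (n+1) * y ^ (n+1) * c ^ ((n+1).choose 2) := by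
          rw [hchoose, pow_succ x, pow_succ y, pow_add]
          simp only [mul_assoc]
          rw [hm1, ← pow_add, ← pow_add, Nat.add_comm]

theorem stmt_3 {G : Type*} [Group G] [Fintype G] {p k : ℕ} (hp : p.Prime)
    (hcard : Fintype.card G = p ^ k)
    (H₁ H₂ : Subgroup G) (hne : H₁ ≠ H₂)
    (hab₁ : IsMulCommutative H₁) (hab₂ : IsMulCommutative H₂)
    (hi₁ : H₁.index = p) (hi₂ : H₂.index = p) :
    (p ≠ 2 → (∀ x : G, x ^ p ∈ H₁ ⊓ H₂) ∧ ∀ x y : G, (x * y) ^ p = x ^ p * y ^ p) ∧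
    (p = 2 → (∀ x : G, x ^ 4 ∈ H₁ ⊓ H₂) ∧ ∀ x y : G, (x * y) ^ 4 = x ^ 4 * y ^ 4) := by
  haveI : Fact p.Prime := ⟨hp⟩
  have hpg : IsPGroup p G := IsPGroup.of_card (by simpa [Nat.card_eq_fintype_card] using hcard)
  haveI hn₁ : H₁.Normal := normal_of_index_p hp hpg hi₁
  haveI hn₂ : H₂.Normal := normal_of_index_p hp hpg hi₂
  -- x ^ p lies in any normal subgroup of index p
  have hpmem : ∀ (H : Subgroup G), H.Normal → H.index = p → ∀ x : G, x ^ p ∈ H := by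
    intro H hn hi x
    haveI := hn
    have hq : Nat.card (G ⧸ H) = p := by rw [← Subgroup.index_eq_card, hi]
    have : ((x : G ⧸ H)) ^ p = 1 := by rw [← hq]; exact pow_card_eq_one'
    rwa [← QuotientGroup.mk_pow, QuotientGroup.eq_one_iff] at this
  -- commutators lie in any normal subgroup of index p
  have hcmem : ∀ (H : Subgroup G), H.Normal → H.index = p →
      ∀ x y : G, y⁻¹ * x⁻¹ * y * x ∈ H := by
    intro H hn hi x y
    haveI := hn
    have hq : Nat.card (G ⧸ H) = p := by rw [← Subgroup.index_eq_card, hi]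
    haveI : IsCyclic (G ⧸ H) := isCyclic_of_prime_card hq
    letI := IsCyclic.commGroup (α := G ⧸ H)
    have h1 : ((y⁻¹ * x⁻¹ * y * x : G) : G ⧸ H) = 1 := by
      simp only [QuotientGroup.mk_mul, QuotientGroup.mk_inv]
      rw [mul_comm ((y : G ⧸ H))⁻¹ ((x : G ⧸ H))⁻¹]
      simp
    rwa [QuotientGroup.eq_one_iff] at h1
  -- H₁ ⊔ H₂ = ⊤
  have hsup : H₁ ⊔ H₂ = ⊤ := by
    refine eq_top_of_lt_of_index_p hp hi₁ (lt_of_le_of_ne le_sup_left ?_)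
    intro h
    have h21 : H₂ ≤ H₁ := h ▸ le_sup_right
    rcases eq_or_lt_of_le h21 with he | hlt
    · exact hne he.symm
    · have htop := eq_top_of_lt_of_index_p hp hi₂ hlt
      rw [htop, Subgroup.index_top] at hi₁
      exact hp.one_lt.ne hi₁
  -- elements of H₁ ⊓ H₂ are central
  have hcent : ∀ z : G, z ∈ H₁ → z ∈ H₂ → ∀ g : G, Commute z g := by
    intro z hz1 hz2 g
    have hg : g ∈ (↑(H₁ ⊔ H₂) : Set G) := by rw [hsup]; simp
    rw [Subgroup.mul_normal H₁ H₂] at hg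
    obtain ⟨a, ha, b, hb, rfl⟩ := hg
    have hza : z * a = a * z := Subgroup.mul_comm_of_mem_isMulCommutative H₁ hz1 ha
    have hzb : z * b = b * z := Subgroup.mul_comm_of_mem_isMulCommutative H₂ hz2 hb
    show z * (a * b) = (a * b) * z
    rw [← mul_assoc, hza, mul_assoc, hzb, ← mul_assoc]
  -- the main identity and the vanishing of the p-th power of the commutator
  have hmain : ∀ x y : G, (x * y) ^ p = x ^ p * y ^ p *
      (y⁻¹ * x⁻¹ * y * x) ^ (p.choose 2) ∧ (y⁻¹ * x⁻¹ * y * x) ^ p = 1 := by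
    intro x y
    have hcc : ∀ g : G, Commute (y⁻¹ * x⁻¹ * y * x) g := fun g =>
      hcent _ (hcmem H₁ hn₁ hi₁ x y) (hcmem H₂ hn₂ hi₂ x y) g
    have hyx : y * x = x * y * (y⁻¹ * x⁻¹ * y * x) := by group
    have hxpc : ∀ g : G, Commute (x ^ p) g := fun g =>
      hcent (x ^ p) (hpmem H₁ hn₁ hi₁ x) (hpmem H₂ hn₂ hi₂ x) g
    have hcp : (y⁻¹ * x⁻¹ * y * x) ^ p = 1 := by
      have h2 : (y⁻¹ * x⁻¹ * y) * x * x = x * (y⁻¹ * x⁻¹ * y) * x := by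
        rw [mul_assoc x (y⁻¹ * x⁻¹ * y) x]
        exact (hcc x).eq
      have hAx : (y⁻¹ * x⁻¹ * y) * x = x * (y⁻¹ * x⁻¹ * y) := mul_right_cancel h2
      have h4 : (y⁻¹ * x⁻¹ * y * x) ^ p = (y⁻¹ * x⁻¹ * y) ^ p * x ^ p :=
        Commute.mul_pow hAx p
      have h5 : (y⁻¹ * x⁻¹ * y) ^ p = y⁻¹ * (x⁻¹) ^ p * y := by
        rw [show y⁻¹ * x⁻¹ * y = y⁻¹ * x⁻¹ * (y⁻¹)⁻¹ by rw [inv_inv], conj_pow, inv_inv]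
      rw [h4, h5, inv_pow, mul_assoc y⁻¹ (x ^ p)⁻¹ y, ((hxpc y).inv_left).eq]
      group
    exact ⟨mul_pow_eq hcc hyx p, hcp⟩
  constructor
  · intro hp2
    refine ⟨fun x => ⟨hpmem H₁ hn₁ hi₁ x, hpmem H₂ hn₂ hi₂ x⟩, fun x y => ?_⟩
    obtain ⟨hform, hcp⟩ := hmain x y
    have hodd : 2 ∣ p - 1 := by
      rcases hp.eq_two_or_odd with h | h
      · exact absurd h hp2
      · have := hp.two_le; omega
    have hch : p.choose 2 = p * ((p - 1) / 2) := by
      rw [Nat.choose_two_right, Nat.mul_div_assoc p hodd]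
    rw [hform, hch, pow_mul, hcp, one_pow, mul_one]
  · intro hp2
    subst hp2
    constructor
    · intro x
      have h1 : x ^ 2 ∈ H₁ := hpmem H₁ hn₁ hi₁ x
      have h2 : x ^ 2 ∈ H₂ := hpmem H₂ hn₂ hi₂ x
      have h4 : x ^ 4 = x ^ 2 * x ^ 2 := by group
      rw [h4]
      exact ⟨H₁.mul_mem h1 h1, H₂.mul_mem h2 h2⟩
    · intro x y
      obtain ⟨_, hcp⟩ := hmain x y
      have hcc : ∀ g : G, Commute (y⁻¹ * x⁻¹ * y * x) g := fun g =>
        hcent _ (hcmem H₁ hn₁ hi₁ x y) (hcmem H₂ hn₂ hi₂ x y) g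
      have hyx : y * x = x * y * (y⁻¹ * x⁻¹ * y * x) := by group
      have h6 := mul_pow_eq hcc hyx 4
      rw [h6, show Nat.choose 4 2 = 6 by decide,
        show (6 : ℕ) = 2 * 3 by norm_num, pow_mul, hcp, one_pow, mul_one]
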